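/- Let 0 < p0 < p1 < 1, let p ∈ (0,1), and let X_1, X_2, … be i.i.d. Bernoulli(p) random variables. Then for any real numbers l < 0 < u, the SPRT stopping step is almost surely finite: with probability 1 there exists n ≥ 1 such that Λ_n(X) ∉ (l, u). -/

import Mathlib

open MeasureTheory ProbabilityTheory
open scoped ENNReal

noncomputable def sprtLLR (p0 p1 : ℝ) (x : ℕ → ℝ) (n : ℕ) : ℝ :=
  ∑ i ∈ Finset.Icc 1 n,
    Real.log ((p1 ^ (x i) * (1 - p1) ^ (1 - x i)) / (p0 ^ (x i) * (1 - p0) ^ (1 - x i)))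

lemma sprtLLR_block (p0 p1 : ℝ) (x : ℕ → ℝ) (m k : ℕ)
    (hx : ∀ i ∈ Finset.Ioc m (m + k), x i = 1) :
    sprtLLR p0 p1 x (m + k) = sprtLLR p0 p1 x m + k * Real.log (p1 / p0) := by
  unfold sprtLLR
  have h1 : ∀ n : ℕ, Finset.Icc 1 n = Finset.Ioc 0 n := fun n => rfl
  rw [h1, h1, ← Finset.sum_Ioc_consecutive _ (Nat.zero_le m) (Nat.le_add_right m k)]
  congr 1
  rw [Finset.sum_congr rfl (fun i hi => ?_), Finset.sum_const, Nat.card_Ioc,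
    Nat.add_sub_cancel_left, nsmul_eq_mul]
  rw [hx i hi]
  norm_num

theorem sprt_stops_almost_surely (p0 p1 p : ℝ)
    (hp0 : 0 < p0) (hp01 : p0 < p1) (hp1 : p1 < 1) (hp : 0 < p) (hp' : p < 1)
    {Ω : Type*} [MeasurableSpace Ω] (μ : Measure Ω) [IsProbabilityMeasure μ]
    (X : ℕ → Ω → ℝ) (hXmeas : ∀ i, Measurable (X i))
    (hindep : iIndepFun X μ)
    (hlaw : ∀ i, Measure.map (X i) μ =
      ENNReal.ofReal p • Measure.dirac (1 : ℝ) +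
        ENNReal.ofReal (1 - p) • Measure.dirac (0 : ℝ))
    (l u : ℝ) (hl : l < 0) (hu : 0 < u) :
    ∀ᵐ ω ∂μ, ∃ n, 1 ≤ n ∧ sprtLLR p0 p1 (fun i => X i ω) n ∉ Set.Ioo l u := by
  set a : ℝ := Real.log (p1 / p0) with ha_def
  have ha : 0 < a := Real.log_pos ((one_lt_div hp0).2 hp01)
  obtain ⟨k, hk⟩ := exists_nat_gt ((u - l) / a)
  have hk' : u - l < k * a := (div_lt_iff₀ ha).mp hk
  have hkpos : 0 < k := by
    have : (0 : ℝ) < k := lt_trans (div_pos (by linarith) ha) hk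
    exact_mod_cast this
  -- single-coordinate events
  set B : ℕ → Set Ω := fun i => X i ⁻¹' {1} with hB_def
  have hBm : ∀ i, MeasurableSet[(inferInstance : MeasurableSpace ℝ).comap (X i)] (B i) :=
    fun i => ⟨{1}, measurableSet_singleton 1, rfl⟩
  have hBmeas : ∀ i, MeasurableSet (B i) := fun i => (hXmeas i) (measurableSet_singleton 1)
  have hBmu : ∀ i, μ (B i) = ENNReal.ofReal p := by
    intro i
    have h : μ (B i) = (Measure.map (X i) μ) {1} :=
      (Measure.map_apply (hXmeas i) (measurableSet_singleton (1 : ℝ))).symm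
    rw [h, hlaw i]
    simp [Measure.dirac_apply]
  have hbiInter : ∀ T : Finset ℕ, μ (⋂ i ∈ T, B i) = ENNReal.ofReal p ^ T.card := by
    intro T
    rw [hindep.meas_biInter (fun i _ => hBm i)]
    simp [hBmu, Finset.prod_const]
  -- block events
  set A : ℕ → Set Ω := fun j => ⋂ i ∈ Finset.Ioc (j * k) (j * k + k), B i with hA_def
  have hAmeas : ∀ j, MeasurableSet (A j) :=
    fun j => Finset.measurableSet_biInter _ fun i _ => hBmeas i
  have hAmu : ∀ j, μ (A j) = ENNReal.ofReal p ^ k := by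
    intro j
    rw [hA_def]
    rw [hbiInter, Nat.card_Ioc, Nat.add_sub_cancel_left]
  have hdisj0 : ∀ j1 j2 : ℕ, j1 < j2 →
      Disjoint (Finset.Ioc (j1 * k) (j1 * k + k)) (Finset.Ioc (j2 * k) (j2 * k + k)) := by
    intro j1 j2 h
    rw [Finset.disjoint_left]
    intro i hi1 hi2
    rw [Finset.mem_Ioc] at hi1 hi2
    have hle : j1 * k + k ≤ j2 * k := by
      calc j1 * k + k = (j1 + 1) * k := by ring
        _ ≤ j2 * k := Nat.mul_le_mul_right k h
    omega
  have hdisj : ∀ j1 j2 : ℕ, j1 ≠ j2 →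
      Disjoint (Finset.Ioc (j1 * k) (j1 * k + k)) (Finset.Ioc (j2 * k) (j2 * k + k)) := by
    intro j1 j2 hne
    rcases hne.lt_or_gt with h | h
    · exact hdisj0 j1 j2 h
    · exact (hdisj0 j2 j1 h).symm
  have hAindep : iIndepSet A μ := by
    rw [iIndepSet_iff_meas_biInter hAmeas]
    intro s
    have hU : (⋂ j ∈ s, A j) =
        ⋂ i ∈ s.biUnion (fun j => Finset.Ioc (j * k) (j * k + k)), B i := by
      rw [hA_def]
      simp only [Finset.set_biInter_biUnion]
    rw [hU, hbiInter, Finset.card_biUnion (fun j1 _ j2 _ hne => hdisj j1 j2 hne)]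
    simp [hAmu, Nat.card_Ioc, Finset.sum_const, pow_mul, Finset.prod_const, mul_comm]
  have hsum : (∑' j, μ (A j)) = ∞ := by
    simp only [hAmu]
    exact ENNReal.tsum_const_eq_top_of_ne_zero
      (pow_ne_zero _ (by simp [ENNReal.ofReal_eq_zero, not_le, hp]))
  have hone : μ (Filter.limsup A Filter.atTop) = 1 :=
    measure_limsup_eq_one hAmeas hAindep hsum
  have hsub : Filter.limsup A Filter.atTop ⊆ ⋃ j, A j := by
    have hle : Filter.limsup A Filter.atTop ≤ ⨆ j, A j := by
      rw [Filter.limsup_eq_iInf_iSup_of_nat]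
      exact iInf_le_of_le 0 (iSup_le fun i => iSup_le fun _ => le_iSup A i)
    rw [Set.iSup_eq_iUnion] at hle
    exact hle
  have hmuU : μ (⋃ j, A j) = 1 :=
    le_antisymm prob_le_one (hone ▸ measure_mono hsub)
  have hae : ∀ᵐ ω ∂μ, ω ∈ ⋃ j, A j := by
    rw [ae_iff]
    have h2 : {ω | ω ∉ ⋃ j, A j} = (⋃ j, A j)ᶜ := rfl
    rw [h2, prob_compl_eq_zero_iff (MeasurableSet.iUnion hAmeas)]
    exact hmuU
  filter_upwards [hae] with ω hω
  obtain ⟨j, hj⟩ := Set.mem_iUnion.mp hω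
  have hx1 : ∀ i ∈ Finset.Ioc (j * k) (j * k + k), X i ω = 1 := by
    intro i hi
    have := Set.mem_iInter₂.mp hj i hi
    simpa [hB_def] using this
  have hblock := sprtLLR_block p0 p1 (fun i => X i ω) (j * k) k hx1
  by_cases hcase : l < sprtLLR p0 p1 (fun i => X i ω) (j * k)
  · refine ⟨j * k + k, by omega, ?_⟩
    rw [hblock]
    intro hmem
    have h2 := hmem.2
    simp only [ha_def] at *
    linarith
  · push_neg at hcase
    have hjne : j ≠ 0 := by
      intro h0
      subst h0
      have : sprtLLR p0 p1 (fun i => X i ω) (0 * k) = 0 := by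
        simp [sprtLLR]
      rw [this] at hcase
      linarith
    refine ⟨j * k, Nat.one_le_iff_ne_zero.mpr (Nat.mul_ne_zero hjne (by omega)), ?_⟩
    intro hmem
    exact absurd hmem.1 (not_lt.mpr hcase)
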